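/- Let V be a finite-dimensional vector space over ℚ, let (c_n)_{n∈ℕ} be a countable family of non-zero vectors of V, let S ⊂ V be a ℚ-linear subspace of codimension one and let e ∈ V \ S. Assume: (i) for every n, writing c_n = γ_n·e + s_n with γ_n ∈ ℚ and s_n ∈ S, the coefficient γ_n is strictly positive; (ii) in V_ℝ := ℝ ⊗_ℚ V (equipped with its canonical topology as a finite-dimensional real vector space) the vectors (1/γ_n)·c_n converge to e as n → ∞; (iii) there exist indices n_1,…,n_s and strictly positive real numbers λ_1,…,λ_s such that λ_1·c_{n_1} + ⋯ + λ_s·c_{n_s} lies in the real span of e, and such that the images of c_{n_1},…,c_{n_s} in the quotient V/⟨e⟩ span V/⟨e⟩ over ℚ. Then there exists a finite subset F ⊆ ℕ such that the cone C = { Σ_n λ_n c_n : λ_n ∈ ℝ_{≥0}, almost all λ_n = 0 } ⊆ V_ℝ equals the set of non-negative real linear combinations of {c_i : i ∈ F}; in particular C is a rational polyhedral cone. -/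

import Mathlib

open scoped TensorProduct BigOperators


/-- Regroup a nonnegative combination indexed by `Fin t` into one indexed by a finset. -/
lemma fiber_regroup {W : Type*} [AddCommGroup W] [Module ℝ W] (w : ℕ → W) {t : ℕ}
    (idx : Fin t → ℕ) (F : Finset ℕ) (hidx : ∀ i, idx i ∈ F)
    (coeff : Fin t → ℝ) (hc : ∀ i, 0 ≤ coeff i) (x : W)
    (hx : x = ∑ i, coeff i • w (idx i)) :
    ∃ μ : ℕ → ℝ, (∀ j, 0 ≤ μ j) ∧ x = ∑ j ∈ F, μ j • w j := by
  refine ⟨fun j => ∑ i ∈ Finset.univ.filter (fun i => idx i = j), coeff i,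
    fun j => Finset.sum_nonneg fun i _ => hc i, ?_⟩
  rw [hx, ← Finset.sum_fiberwise_of_maps_to (fun i _ => hidx i)
    (fun i => coeff i • w (idx i))]
  refine Finset.sum_congr rfl fun j _ => ?_
  rw [Finset.sum_smul]
  refine Finset.sum_congr rfl fun i hi => ?_
  rw [(Finset.mem_filter.mp hi).2]

/-- The wrap-up: if every `w n` is a nonnegative combination of `w j`, `j ∈ F`, then the cone
generated by all the `w n` equals the cone generated by the `w j`, `j ∈ F`. -/
lemma cone_wrapup {W : Type*} [AddCommGroup W] [Module ℝ W] (w : ℕ → W) (F : Finset ℕ)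
    (hA : ∀ n, ∃ μ : ℕ → ℝ, (∀ j, 0 ≤ μ j) ∧ w n = ∑ j ∈ F, μ j • w j) :
    {v : W | ∃ lam : ℕ →₀ ℝ, (∀ n, 0 ≤ lam n) ∧ v = lam.sum fun n a => a • w n} =
    {v : W | ∃ lam : ℕ → ℝ, (∀ n, 0 ≤ lam n) ∧ v = ∑ i ∈ F, lam i • w i} := by
  choose μ hμnn hμ using hA
  ext v
  constructor
  · rintro ⟨lam, hnn, rfl⟩
    refine ⟨fun j => ∑ n ∈ lam.support, lam n * μ n j,
      fun j => Finset.sum_nonneg fun n _ => mul_nonneg (hnn n) (hμnn n j), ?_⟩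
    rw [Finsupp.sum]
    calc ∑ n ∈ lam.support, lam n • w n
        = ∑ n ∈ lam.support, ∑ j ∈ F, (lam n * μ n j) • w j := by
          refine Finset.sum_congr rfl fun n _ => ?_
          rw [hμ n, Finset.smul_sum]
          exact Finset.sum_congr rfl fun j _ => smul_smul _ _ _
      _ = ∑ j ∈ F, (∑ n ∈ lam.support, lam n * μ n j) • w j := by
          rw [Finset.sum_comm]
          exact Finset.sum_congr rfl fun j _ => (Finset.sum_smul).symm
  · rintro ⟨lam, hnn, rfl⟩
    refine ⟨Finsupp.onFinset F (fun n => if n ∈ F then lam n else 0)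
      (fun n h => by by_contra hn; simp [hn] at h), fun n => ?_, ?_⟩
    · simp only [Finsupp.onFinset_apply]
      split <;> simp [hnn _]
    · rw [show ((Finsupp.onFinset F (fun n => if n ∈ F then lam n else 0)
          (fun n h => by by_contra hn; simp [hn] at h)).sum fun n a => a • w n) =
          ∑ i ∈ F, (if i ∈ F then lam i else 0) • w i from
        Finsupp.sum_of_support_subset _ Finsupp.support_onFinset_subset _
          (fun i _ => zero_smul ℝ _)]
      refine Finset.sum_congr rfl fun i hi => ?_
      simp [hi]

/-- A functional vanishing on a codimension-one subspace, taking value 1 at `e ∉ S`. -/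
lemma exists_functional (V : Type*) [AddCommGroup V] [Module ℚ V] [FiniteDimensional ℚ V]
    (S : Submodule ℚ V) (hS : Module.finrank ℚ (V ⧸ S) = 1) (e : V) (he : e ∉ S) :
    ∃ f : V →ₗ[ℚ] ℚ, f e = 1 ∧ ∀ v ∈ S, f v = 0 := by
  have he0 : Submodule.Quotient.mk (p := S) e ≠ 0 := by
    simpa [Submodule.Quotient.mk_eq_zero] using he
  have hli : LinearIndependent ℚ (fun _ : Fin 1 => Submodule.Quotient.mk (p := S) e) :=
    linearIndependent_unique_iff.mpr he0
  have hsp : ⊤ ≤ Submodule.span ℚ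
      (Set.range fun _ : Fin 1 => Submodule.Quotient.mk (p := S) e) := by
    rw [Set.range_const]
    have h1 : Module.finrank ℚ (Submodule.span ℚ ({Submodule.Quotient.mk (p := S) e} :
        Set (V ⧸ S))) = Module.finrank ℚ (V ⧸ S) := by
      rw [hS, finrank_span_singleton he0]
    exact le_of_eq (Submodule.eq_top_of_finrank_eq h1).symm
  let b : Module.Basis (Fin 1) ℚ (V ⧸ S) := Module.Basis.mk hli hsp
  refine ⟨(b.coord 0) ∘ₗ S.mkQ, ?_, fun v hv => ?_⟩
  · have h : Submodule.Quotient.mk (p := S) e = b 0 := (Module.Basis.mk_apply hli hsp 0).symm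
    simp only [LinearMap.comp_apply, Submodule.mkQ_apply, h, Module.Basis.coord_apply,
      Module.Basis.repr_self, Finsupp.single_eq_same]
  · have h : Submodule.Quotient.mk (p := S) v = 0 := (Submodule.Quotient.mk_eq_zero S).mpr hv
    simp only [LinearMap.comp_apply, Submodule.mkQ_apply, h, map_zero]

/-- Base change of a functional. -/
lemma exists_psi (V : Type*) [AddCommGroup V] [Module ℚ V] (f : V →ₗ[ℚ] ℚ) :
    ∃ ψ : (ℝ ⊗[ℚ] V) →ₗ[ℝ] ℝ, ∀ v : V, ψ ((1 : ℝ) ⊗ₜ[ℚ] v) = (f v : ℝ) := by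
  refine ⟨(TensorProduct.AlgebraTensorModule.rid ℚ ℝ ℝ).toLinearMap ∘ₗ f.baseChange ℝ,
    fun v => ?_⟩
  simp [LinearMap.baseChange_tmul, TensorProduct.AlgebraTensorModule.rid_tmul,
    Rat.smul_one_eq_cast]

lemma tmul_qsmul (V : Type*) [AddCommGroup V] [Module ℚ V] (q : ℚ) (v : V) :
    (1 : ℝ) ⊗ₜ[ℚ] (q • v) = (q : ℝ) • ((1 : ℝ) ⊗ₜ[ℚ] v) := by
  rw [TensorProduct.tmul_smul, ← algebraMap_smul ℝ q ((1 : ℝ) ⊗ₜ[ℚ] v), eq_ratCast]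

/-- Criterion for rational polyhedrality of the cone generated by a countable family of
vectors `c_n` in a finite-dimensional `ℚ`-vector space `V`: if (i) with respect to a
codimension-one subspace `S` and a vector `e ∉ S` each `c_n = γ_n e + s_n` has `γ_n > 0`,
(ii) the vectors `(1/γ_n) c_n` converge to `e` in the canonical topology of the
finite-dimensional real vector space `V_ℝ = ℝ ⊗[ℚ] V` (expressed here as weak convergence,
i.e. convergence under every real linear functional, which is equivalent in finite
dimension), and (iii) some strictly positive real combination of finitely many `c_{n_i}`
lies in the real span of `e` while the images of these `c_{n_i}` span `V/⟨e⟩` over `ℚ`,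
then the cone `C = {Σ λ_n c_n : λ_n ∈ ℝ_{≥0}, almost all zero}` is generated by finitely
many of the `c_n`; in particular it is a rational polyhedral cone. -/
theorem cone_rational_polyhedral_criterion
    (V : Type*) [AddCommGroup V] [Module ℚ V] [FiniteDimensional ℚ V]
    (c : ℕ → V) (hc : ∀ n, c n ≠ 0)
    (S : Submodule ℚ V) (hS : Module.finrank ℚ (V ⧸ S) = 1)
    (e : V) (he : e ∉ S)
    (γ : ℕ → ℚ) (s : ℕ → V) (hsS : ∀ n, s n ∈ S)
    (hdecomp : ∀ n, c n = γ n • e + s n)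
    (hpos : ∀ n, 0 < γ n)
    (hconv : ∀ φ : (ℝ ⊗[ℚ] V) →ₗ[ℝ] ℝ,
      Filter.Tendsto (fun n => φ ((1 : ℝ) ⊗ₜ[ℚ] ((γ n)⁻¹ • c n))) Filter.atTop
        (nhds (φ ((1 : ℝ) ⊗ₜ[ℚ] e))))
    (hiii : ∃ (t : ℕ) (idx : Fin t → ℕ) (lam : Fin t → ℝ),
      (∀ i, 0 < lam i) ∧
      (∑ i, lam i • ((1 : ℝ) ⊗ₜ[ℚ] c (idx i))) ∈
        Submodule.span ℝ ({(1 : ℝ) ⊗ₜ[ℚ] e} : Set (ℝ ⊗[ℚ] V)) ∧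
      Submodule.span ℚ
        (Set.range fun i =>
          Submodule.Quotient.mk (p := Submodule.span ℚ ({e} : Set V)) (c (idx i))) = ⊤) :
    ∃ F : Finset ℕ,
      {v : ℝ ⊗[ℚ] V | ∃ lam : ℕ →₀ ℝ, (∀ n, 0 ≤ lam n) ∧
          v = lam.sum fun n a => a • ((1 : ℝ) ⊗ₜ[ℚ] c n)} =
      {v : ℝ ⊗[ℚ] V | ∃ lam : ℕ → ℝ, (∀ n, 0 ≤ lam n) ∧
          v = ∑ i ∈ F, lam i • ((1 : ℝ) ⊗ₜ[ℚ] c i)} := by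
  obtain ⟨f, hfe, hfS⟩ := exists_functional V S hS e he
  obtain ⟨ψ, hψ⟩ := exists_psi V f
  have hfc : ∀ n, f (c n) = γ n := by
    intro n
    rw [hdecomp n, map_add, map_smul, hfe, hfS _ (hsS n), smul_eq_mul, mul_one, add_zero]
  obtain ⟨t, idx, lam, hlampos, hspanE, hquot⟩ := hiii
  rcases Nat.eq_zero_or_pos t with ht0 | htpos
  · -- degenerate case : V = ℚ e
    subst ht0
    have hquot' : ∀ v : V, v ∈ Submodule.span ℚ ({e} : Set V) := by
      intro v
      have hr : (Set.range fun i : Fin 0 =>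
          Submodule.Quotient.mk (p := Submodule.span ℚ ({e} : Set V)) (c (idx i))) = ∅ :=
        Set.range_eq_empty _
      rw [hr, Submodule.span_empty] at hquot
      have h0 : Submodule.Quotient.mk (p := Submodule.span ℚ ({e} : Set V)) v
          ∈ (⊥ : Submodule ℚ (V ⧸ Submodule.span ℚ ({e} : Set V))) := by
        rw [hquot]; trivial
      rw [Submodule.mem_bot] at h0
      exact (Submodule.Quotient.mk_eq_zero _).mp h0
    have hce : ∀ n, c n = γ n • e := by
      intro n
      obtain ⟨q, hq⟩ := Submodule.mem_span_singleton.mp (hquot' (c n))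
      by_cases hqe : q = γ n
      · rw [← hq, hqe]
      · exfalso
        apply he
        have hsn : s n = (q - γ n) • e := by
          have h1 := hdecomp n
          rw [← hq] at h1
          rw [sub_smul]
          rw [eq_sub_iff_add_eq, add_comm, ← h1]
        have h2 : e = (q - γ n)⁻¹ • s n := by
          rw [hsn, smul_smul, inv_mul_cancel₀ (sub_ne_zero.mpr hqe), one_smul]
        rw [h2]
        exact Submodule.smul_mem _ _ (hsS n)
    refine ⟨{0}, cone_wrapup (fun n => (1 : ℝ) ⊗ₜ[ℚ] c n) _ ?_⟩
    intro n
    refine ⟨fun j => if j = 0 then ((γ n : ℝ) / (γ 0 : ℝ)) else 0, fun j => ?_, ?_⟩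
    · dsimp only
      split
      · exact div_nonneg (by exact_mod_cast (hpos n).le) (by exact_mod_cast (hpos 0).le)
      · exact le_refl 0
    · dsimp only
      simp only [Finset.sum_singleton, if_pos rfl, if_true]
      rw [hce n, hce 0, tmul_qsmul, tmul_qsmul, smul_smul]
      congr 1
      have h0 : (γ 0 : ℝ) ≠ 0 := by exact_mod_cast (hpos 0).ne'
      field_simp
  · -- main case
    have hne : Nonempty (Fin t) := ⟨⟨0, htpos⟩⟩
    obtain ⟨μ, hμ⟩ := Submodule.mem_span_singleton.mp hspanE
    have hψe : ψ ((1 : ℝ) ⊗ₜ[ℚ] e) = 1 := by rw [hψ, hfe]; norm_num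
    have hμval : μ = ∑ i, lam i * (γ (idx i) : ℝ) := by
      have h1 := congrArg ψ hμ
      rw [map_smul, hψe, smul_eq_mul, mul_one, map_sum] at h1
      rw [h1]
      refine Finset.sum_congr rfl fun i _ => ?_
      rw [map_smul, hψ, hfc, smul_eq_mul]
    have hμpos : 0 < μ := by
      rw [hμval]
      exact Finset.sum_pos (fun i _ => mul_pos (hlampos i)
        (by exact_mod_cast hpos (idx i))) Finset.univ_nonempty
    -- span over ℝ of the w (idx i) is everything
    set P := Submodule.span ℝ (Set.range fun i => (1 : ℝ) ⊗ₜ[ℚ] c (idx i)) with hP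
    have heP : (1 : ℝ) ⊗ₜ[ℚ] e ∈ P := by
      have h1 : (1 : ℝ) ⊗ₜ[ℚ] e = μ⁻¹ • ∑ i, lam i • ((1 : ℝ) ⊗ₜ[ℚ] c (idx i)) := by
        rw [← hμ, smul_smul, inv_mul_cancel₀ hμpos.ne', one_smul]
      rw [h1]
      exact Submodule.smul_mem _ _ (Submodule.sum_mem _ fun i _ =>
        Submodule.smul_mem _ _ (Submodule.subset_span ⟨i, rfl⟩))
    have hPtop : P = ⊤ := by
      have hVtop : Submodule.span ℚ (insert e (Set.range fun i => c (idx i))) = ⊤ := by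
        rw [eq_top_iff]
        intro v _
        set p := Submodule.span ℚ ({e} : Set V) with hp
        have h1 : Submodule.Quotient.mk (p := p) v ∈
            Submodule.map p.mkQ (Submodule.span ℚ (Set.range fun i => c (idx i))) := by
          rw [Submodule.map_span]
          have him : p.mkQ '' (Set.range fun i => c (idx i)) =
              Set.range fun i => Submodule.Quotient.mk (p := p) (c (idx i)) := by
            rw [← Set.range_comp]; rfl
          rw [him, hquot]
          trivial
        obtain ⟨u, hu, huv⟩ := h1
        rw [Submodule.span_insert]
        refine Submodule.mem_sup.mpr ⟨v - u, ?_, u, hu, by abel⟩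
        rw [← hp]
        have : (Submodule.Quotient.mk (p := p) (v - u)) = 0 := by
          rw [Submodule.Quotient.mk_sub]
          rw [show Submodule.Quotient.mk (p := p) u = Submodule.Quotient.mk (p := p) v from huv]
          simp
        exact (Submodule.Quotient.mk_eq_zero _).mp this
      have h2 : Submodule.span ℝ ((TensorProduct.mk ℚ ℝ V 1) ''
          (insert e (Set.range fun i => c (idx i)))) = ⊤ := by
        rw [← Submodule.baseChange_span, hVtop, Submodule.baseChange_top]
      rw [eq_top_iff, ← h2, Submodule.span_le]
      rintro x ⟨y, hy, rfl⟩
      rcases hy with rfl | ⟨i, rfl⟩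
      · exact heP
      · exact Submodule.subset_span ⟨i, rfl⟩
    -- linear section and coordinates
    set L := Fintype.linearCombination ℝ (fun i : Fin t => (1 : ℝ) ⊗ₜ[ℚ] c (idx i)) with hL
    have hLapp : ∀ g : Fin t → ℝ, L g = ∑ i, g i • ((1 : ℝ) ⊗ₜ[ℚ] c (idx i)) := fun g => rfl
    have hLrange : LinearMap.range L = ⊤ := by
      rw [hL, Fintype.range_linearCombination]; exact hPtop
    obtain ⟨σ, hσ⟩ := L.exists_rightInverse_of_surjective hLrange
    set a : Fin t → (ℝ ⊗[ℚ] V) →ₗ[ℝ] ℝ := fun i => LinearMap.proj i ∘ₗ σ with ha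
    set d : Fin t → ℝ := fun i => lam i / μ with hd
    have hdpos : ∀ i, 0 < d i := fun i => div_pos (hlampos i) hμpos
    have he' : (1 : ℝ) ⊗ₜ[ℚ] e = ∑ i, d i • ((1 : ℝ) ⊗ₜ[ℚ] c (idx i)) := by
      have h1 : (1 : ℝ) ⊗ₜ[ℚ] e = μ⁻¹ • ∑ i, lam i • ((1 : ℝ) ⊗ₜ[ℚ] c (idx i)) := by
        rw [← hμ, smul_smul, inv_mul_cancel₀ hμpos.ne', one_smul]
      rw [h1, Finset.smul_sum]
      refine Finset.sum_congr rfl fun i _ => ?_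
      rw [smul_smul]
      show (μ⁻¹ * lam i) • ((1 : ℝ) ⊗ₜ[ℚ] c (idx i)) = _
      rw [show μ⁻¹ * lam i = d i from (div_eq_inv_mul _ _).symm]
    have hkey : ∀ v : ℝ ⊗[ℚ] V,
        v = ∑ i, (d i + (a i v - a i ((1 : ℝ) ⊗ₜ[ℚ] e))) • ((1 : ℝ) ⊗ₜ[ℚ] c (idx i)) := by
      intro v
      have h1 : v - (1 : ℝ) ⊗ₜ[ℚ] e = L (σ (v - (1 : ℝ) ⊗ₜ[ℚ] e)) := by
        rw [show L (σ (v - (1 : ℝ) ⊗ₜ[ℚ] e)) = (L ∘ₗ σ) (v - (1 : ℝ) ⊗ₜ[ℚ] e) from rfl, hσ]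
        rfl
      have h2 : v = (1 : ℝ) ⊗ₜ[ℚ] e + ∑ i, (a i v - a i ((1 : ℝ) ⊗ₜ[ℚ] e)) •
          ((1 : ℝ) ⊗ₜ[ℚ] c (idx i)) := by
        nth_rewrite 1 [show v = (1 : ℝ) ⊗ₜ[ℚ] e + (v - (1 : ℝ) ⊗ₜ[ℚ] e) by abel]
        congr 1
        rw [h1, hLapp]
        refine Finset.sum_congr rfl fun i _ => ?_
        congr 1
        rw [ha]
        simp only [LinearMap.comp_apply, LinearMap.proj_apply, map_sub, Pi.sub_apply]
      conv_lhs => rw [h2]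
      nth_rewrite 1 [he']
      rw [← Finset.sum_add_distrib]
      refine Finset.sum_congr rfl fun i _ => ?_
      rw [add_smul]
    -- convergence gives the eventual bound
    have hev : ∀ᶠ n in Filter.atTop, ∀ i : Fin t,
        -(d i) < a i ((1 : ℝ) ⊗ₜ[ℚ] ((γ n)⁻¹ • c n)) - a i ((1 : ℝ) ⊗ₜ[ℚ] e) := by
      rw [Filter.eventually_all]
      intro i
      have h1 : a i ((1 : ℝ) ⊗ₜ[ℚ] e) - d i < a i ((1 : ℝ) ⊗ₜ[ℚ] e) := by
        linarith [hdpos i]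
      filter_upwards [(hconv (a i)).eventually (eventually_gt_nhds h1)] with n hn
      linarith
    obtain ⟨N, hN⟩ := Filter.eventually_atTop.mp hev
    set F : Finset ℕ := Finset.range N ∪ Finset.image idx Finset.univ with hF
    refine ⟨F, cone_wrapup (fun n => (1 : ℝ) ⊗ₜ[ℚ] c n) F ?_⟩
    intro n
    by_cases hnF : n ∈ F
    · refine ⟨fun j => if j = n then 1 else 0, fun j => by dsimp only; split <;> norm_num, ?_⟩
      dsimp only
      rw [show (∑ j ∈ F, (if j = n then (1 : ℝ) else 0) • ((1 : ℝ) ⊗ₜ[ℚ] c j)) =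
          ∑ j ∈ F, (if j = n then (1 : ℝ) ⊗ₜ[ℚ] c j else 0) from
        Finset.sum_congr rfl fun j _ => by split <;> simp]
      rw [Finset.sum_ite_eq' F n (fun j => (1 : ℝ) ⊗ₜ[ℚ] c j), if_pos hnF]
    · have hn : N ≤ n := by
        rcases Finset.notMem_union.mp hnF with ⟨h1, _⟩
        exact le_of_not_gt fun h => h1 (Finset.mem_range.mpr h)
      have hkn := hN n hn
      have hγn : ((γ n : ℝ)) ≠ 0 := by exact_mod_cast (hpos n).ne'
      have h2 : (1 : ℝ) ⊗ₜ[ℚ] c n = (γ n : ℝ) • ((1 : ℝ) ⊗ₜ[ℚ] ((γ n)⁻¹ • c n)) := by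
        rw [tmul_qsmul, smul_smul, Rat.cast_inv, mul_inv_cancel₀ hγn, one_smul]
      have hrep : (1 : ℝ) ⊗ₜ[ℚ] c n = ∑ i, ((γ n : ℝ) *
          (d i + (a i ((1 : ℝ) ⊗ₜ[ℚ] ((γ n)⁻¹ • c n)) - a i ((1 : ℝ) ⊗ₜ[ℚ] e)))) •
          ((1 : ℝ) ⊗ₜ[ℚ] c (idx i)) := by
        rw [h2]
        nth_rewrite 1 [hkey ((1 : ℝ) ⊗ₜ[ℚ] ((γ n)⁻¹ • c n))]
        rw [Finset.smul_sum]
        refine Finset.sum_congr rfl fun i _ => ?_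
        rw [smul_smul]
      refine fiber_regroup (fun n => (1 : ℝ) ⊗ₜ[ℚ] c n) idx F
        (fun i => Finset.mem_union_right _ (Finset.mem_image_of_mem idx (Finset.mem_univ i)))
        _ (fun i => ?_) _ hrep
      have := hkn i
      have := (hpos n)
      have hγnn : (0 : ℝ) ≤ (γ n : ℝ) := by positivity
      refine mul_nonneg hγnn ?_
      linarith [hkn i]
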